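/- Let f(x) = ∑_{m∈ℤ} α_m e^{2πimx} with α ∈ ℓ¹(ℤ), and let S_n(f) = (1/(2n+1)) ∑_{j=0}^{2n} f(j/(2n+1)) D_n(· − j/(2n+1)), where D_n(x) = ∑_{|l|≤n} e^{2πilx} is the Dirichlet kernel. Then the L²([0,1])-error satisfies ‖f − S_n(f)‖₂² = ∑_{|j|>n} |α_j|² + ∑_{|k|≤n} |∑_{θ≠0} α_{k+θ(2n+1)}|². -/

import Mathlib

open Complex MeasureTheory

noncomputable def EE (t : ℝ) : ℂ := Complex.exp (2 * Real.pi * Complex.I * t)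

lemma EE_add (s t : ℝ) : EE (s + t) = EE s * EE t := by
  rw [EE, EE, EE, ← Complex.exp_add]; congr 1; push_cast; ring

lemma EE_int (k : ℤ) : EE k = 1 := by
  rw [EE, show ((2:ℂ) * Real.pi * Complex.I * ((k:ℝ):ℂ)) = (k:ℂ) * (2 * Real.pi * Complex.I) by push_cast; ring]
  exact Complex.exp_int_mul_two_pi_mul_I k

lemma EE_norm (t : ℝ) : ‖EE t‖ = 1 := by
  simp [EE, Complex.norm_exp]

lemma EE_conj (t : ℝ) : (starRingEnd ℂ) (EE t) = EE (-t) := by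
  rw [EE, EE, ← Complex.exp_conj]
  have : (starRingEnd ℂ) (2 * (Real.pi:ℂ) * Complex.I * (t:ℝ)) = 2 * (Real.pi:ℂ) * Complex.I * ((-t : ℝ):ℂ) := by
    rw [map_mul, map_mul, map_mul, Complex.conj_I, Complex.conj_ofReal, Complex.conj_ofReal,
      show (starRingEnd ℂ) 2 = 2 from map_ofNat _ 2]
    push_cast; ring
  rw [this]

lemma EE_cont : Continuous EE := by
  exact Complex.continuous_exp.comp (by continuity)

lemma integral_EE (k : ℤ) : (∫ x in (0:ℝ)..1, EE (k * x)) = if k = 0 then 1 else 0 := by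
  rcases eq_or_ne k 0 with h | h
  · simp [h, EE]
  · rw [if_neg h]
    have hc : (2 * (Real.pi:ℂ) * Complex.I * k) ≠ 0 := by
      simp [Complex.ext_iff, Real.pi_ne_zero, h]
    have : ∀ x : ℝ, EE (k * x) = Complex.exp ((2 * (Real.pi:ℂ) * Complex.I * k) * x) := by
      intro x; rw [EE]; congr 1; push_cast; ring
    simp only [this]
    rw [integral_exp_mul_complex hc]
    have h1 : Complex.exp (2 * (Real.pi:ℂ) * Complex.I * (k:ℂ)) = 1 := by
      rw [show ((2:ℂ) * Real.pi * Complex.I * k) = (k:ℂ) * (2 * Real.pi * Complex.I) by ring]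
      exact Complex.exp_int_mul_two_pi_mul_I k
    simp [h1]

lemma dft_sum (N : ℕ) (hN : 0 < N) (k : ℤ) :
    ∑ j ∈ Finset.range N, EE ((k * j) / N) = if (N:ℤ) ∣ k then (N:ℂ) else 0 := by
  have hNR : (N:ℝ) ≠ 0 := Nat.cast_ne_zero.mpr hN.ne'
  rcases Classical.em ((N:ℤ) ∣ k) with h | h
  · obtain ⟨m, rfl⟩ := h
    rw [if_pos ⟨m, rfl⟩]
    have heq : ∀ j ∈ Finset.range N, EE (((((N:ℤ) * m : ℤ)):ℝ) * (j:ℝ) / (N:ℝ)) = 1 := by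
      intro j _
      have harg : ((((N:ℤ) * m : ℤ)):ℝ) * (j:ℝ) / (N:ℝ) = (((m * j : ℤ)):ℝ) := by
        push_cast; field_simp
      rw [harg, EE_int]
    rw [Finset.sum_congr rfl heq]
    simp
  · rw [if_neg h]
    have hpow : ∀ j : ℕ, EE ((k * j) / N) = EE ((k:ℝ) / N) ^ j := by
      intro j
      rw [EE, EE, ← Complex.exp_nat_mul]
      congr 1
      push_cast; ring
    have hζN : EE ((k:ℝ) / N) ^ N = 1 := by
      rw [← hpow N]
      rw [show ((k:ℝ) * (N:ℕ)) / (N:ℝ) = ((k:ℤ):ℝ) by field_simp]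
      exact EE_int k
    have hζ1 : EE ((k:ℝ) / N) ≠ 1 := by
      intro hc
      apply h
      rw [EE] at hc
      obtain ⟨m, hm⟩ := Complex.exp_eq_one_iff.mp hc
      have h2 : (2 * (Real.pi:ℂ) * Complex.I) ≠ 0 := by
        simp [Complex.ext_iff, Real.pi_ne_zero]
      have : (((k:ℝ) / N : ℝ) : ℂ) = (m:ℂ) := by
        have : (2 * (Real.pi:ℂ) * Complex.I) * (((k:ℝ)/N : ℝ):ℂ) = (2 * (Real.pi:ℂ) * Complex.I) * (m:ℂ) := by
          rw [hm]; ring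
        exact mul_left_cancel₀ h2 this
      have hreal : (k:ℝ) / N = (m:ℝ) := by
        exact_mod_cast this
      refine Dvd.intro_left m ?_
      have : (k:ℝ) = (m:ℝ) * (N:ℝ) := by
        field_simp at hreal
        linarith [hreal]
      exact (by exact_mod_cast this : k = m * (N:ℤ)).symm
    simp only [hpow]
    rw [geom_sum_eq hζ1, hζN]
    simp

lemma parseval_hand (γ : ℤ → ℂ) (hγ : Summable fun m => ‖γ m‖) :
    (∫ x in (0:ℝ)..1, ‖∑' m : ℤ, γ m * EE (m * x)‖ ^ 2) = ∑' m : ℤ, ‖γ m‖ ^ 2 := by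
  have hnorm : ∀ x : ℝ, (fun m : ℤ => ‖γ m * EE (m * x)‖) = fun m : ℤ => ‖γ m‖ := by
    intro x; funext m; rw [norm_mul, EE_norm, mul_one]
  have hsumnx : ∀ x : ℝ, Summable fun m : ℤ => ‖γ m * EE (m * x)‖ := by
    intro x; rw [hnorm x]; exact hγ
  have hsumx : ∀ x : ℝ, Summable fun m : ℤ => γ m * EE (m * x) := fun x => (hsumnx x).of_norm
  set F : ℤ × ℤ → ℝ → ℂ := fun p x => γ p.1 * (starRingEnd ℂ) (γ p.2) * EE ((p.1 - p.2 : ℤ) * x) with hF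
  have hexp : ∀ (p : ℤ × ℤ) (x : ℝ),
      (γ p.1 * EE (p.1 * x)) * (starRingEnd ℂ) (γ p.2 * EE (p.2 * x)) = F p x := by
    intro p x
    have h1 : EE ((p.1:ℝ) * x) * EE (-((p.2:ℝ) * x)) = EE ((p.1 - p.2 : ℤ) * x) := by
      rw [← EE_add]; congr 1; push_cast; ring
    calc (γ p.1 * EE (p.1 * x)) * (starRingEnd ℂ) (γ p.2 * EE (p.2 * x))
        = γ p.1 * (starRingEnd ℂ) (γ p.2) * (EE ((p.1:ℝ) * x) * EE (-((p.2:ℝ) * x))) := by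
          rw [map_mul, EE_conj]; ring
      _ = F p x := by rw [h1]
  -- pointwise product expansion
  set g : ℝ → ℂ := fun x => ∑' m : ℤ, γ m * EE (m * x) with hg
  have hprod : ∀ x : ℝ, g x * (starRingEnd ℂ) (g x) = ∑' p : ℤ × ℤ, F p x := by
    intro x
    have hconj : (starRingEnd ℂ) (g x) = ∑' m : ℤ, (starRingEnd ℂ) (γ m * EE (m * x)) := by
      rw [hg]; exact tsum_star
    rw [hconj, hg]
    rw [tsum_mul_tsum_of_summable_norm (hsumnx x) (by simpa [Complex.norm_conj] using hsumnx x)]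
    exact tsum_congr fun p => hexp p x
  have hms : ∀ z : ℂ, ((‖z‖ ^ 2 : ℝ) : ℂ) = z * (starRingEnd ℂ) z := by
    intro z
    rw [Complex.mul_conj, Complex.normSq_eq_norm_sq]
  have hFcont : ∀ p : ℤ × ℤ, Continuous (F p) := by
    intro p
    exact continuous_const.mul (EE_cont.comp (continuous_const.mul continuous_id))
  have hμ : (volume (Set.Ioc (0:ℝ) 1)) = 1 := by
    rw [Real.volume_Ioc]; norm_num
  have hFnorm : ∀ (p : ℤ × ℤ) (x : ℝ), ‖F p x‖₊ = ‖γ p.1‖₊ * ‖γ p.2‖₊ := by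
    intro p x
    have : ‖F p x‖ = ‖γ p.1‖ * ‖γ p.2‖ := by
      rw [hF]
      simp only [norm_mul, EE_norm, mul_one]
      rw [show ‖(starRingEnd ℂ) (γ p.2)‖ = ‖γ p.2‖ from norm_star _]
    ext
    simpa using this
  have hS : (∑' m : ℤ, (‖γ m‖₊ : ENNReal)) ≠ ⊤ := by
    rw [ENNReal.tsum_coe_ne_top_iff_summable]
    exact NNReal.summable_coe.mp (by simpa [coe_nnnorm] using hγ)
  have hbound : (∑' p : ℤ × ℤ, ∫⁻ x, ‖F p x‖₊ ∂(volume.restrict (Set.Ioc (0:ℝ) 1))) ≠ ⊤ := by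
    have heach : ∀ p : ℤ × ℤ, (∫⁻ x, ‖F p x‖₊ ∂(volume.restrict (Set.Ioc (0:ℝ) 1)))
        = (‖γ p.1‖₊ : ENNReal) * ‖γ p.2‖₊ := by
      intro p
      simp only [hFnorm p]
      rw [MeasureTheory.lintegral_const, MeasureTheory.Measure.restrict_apply MeasurableSet.univ,
        Set.univ_inter, hμ, mul_one]
      push_cast
      rfl
    rw [tsum_congr heach, ENNReal.tsum_prod']
    have hin : ∀ i : ℤ, (∑' j : ℤ, (‖γ i‖₊ : ENNReal) * ‖γ j‖₊) = (‖γ i‖₊ : ENNReal) * ∑' j : ℤ, (‖γ j‖₊ : ENNReal) := fun i => ENNReal.tsum_mul_left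
    rw [tsum_congr hin, ENNReal.tsum_mul_right]
    exact ENNReal.mul_ne_top hS hS
  have hmeas : ∀ p : ℤ × ℤ, AEStronglyMeasurable (F p) (volume.restrict (Set.Ioc (0:ℝ) 1)) :=
    fun p => (hFcont p).aestronglyMeasurable
  have key : ((∫ x in (0:ℝ)..1, ‖g x‖ ^ 2 : ℝ) : ℂ) = ((∑' m : ℤ, ‖γ m‖ ^ 2 : ℝ) : ℂ) := by
    rw [← intervalIntegral.integral_ofReal (f := fun x => ‖g x‖ ^ 2) (a := (0:ℝ)) (b := (1:ℝ)) (μ := volume)]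
    calc (∫ x in (0:ℝ)..1, ((‖g x‖ ^ 2 : ℝ) : ℂ))
        = ∫ x in (0:ℝ)..1, g x * (starRingEnd ℂ) (g x) := by
          apply intervalIntegral.integral_congr
          intro x _
          exact hms (g x)
      _ = ∫ x in Set.Ioc (0:ℝ) 1, (∑' p : ℤ × ℤ, F p x) := by
          rw [intervalIntegral.integral_of_le zero_le_one]
          apply MeasureTheory.setIntegral_congr_fun measurableSet_Ioc
          intro x _
          exact hprod x
      _ = ∑' p : ℤ × ℤ, ∫ x in Set.Ioc (0:ℝ) 1, F p x := MeasureTheory.integral_tsum hmeas hbound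
      _ = ∑' p : ℤ × ℤ, γ p.1 * (starRingEnd ℂ) (γ p.2) * (if p.1 - p.2 = 0 then 1 else 0) := by
          apply tsum_congr
          intro p
          rw [← intervalIntegral.integral_of_le zero_le_one]
          rw [hF]
          simp only
          rw [intervalIntegral.integral_const_mul, integral_EE]
      _ = ∑' m : ℤ, γ m * (starRingEnd ℂ) (γ m) := by
          apply tsum_eq_tsum_of_ne_zero_bij
            (i := fun m : Function.support (fun m : ℤ => γ m * (starRingEnd ℂ) (γ m)) => ((m.1, m.1) : ℤ × ℤ))
          · intro a b h
            exact Subtype.ext (congrArg Prod.fst h)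
          · intro p hp
            have h12 : p.1 = p.2 := by
              by_contra hne
              apply hp
              simp [sub_eq_zero, hne]
            refine ⟨⟨p.1, ?_⟩, ?_⟩
            · intro hz
              apply hp
              simp only [Function.mem_support] at *
              rw [show p = (p.1, p.1) by ext <;> simp [← h12]]
              simpa [sub_eq_zero] using hz
            · ext <;> simp [← h12]
          · intro m
            simp [sub_eq_zero]
      _ = ∑' m : ℤ, ((‖γ m‖ ^ 2 : ℝ) : ℂ) := tsum_congr fun m => (hms (γ m)).symm
      _ = ((∑' m : ℤ, ‖γ m‖ ^ 2 : ℝ) : ℂ) := (Complex.ofReal_tsum _).symm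
  exact_mod_cast key

lemma interp_eq (α : ℤ → ℂ) (hα : Summable fun m => ‖α m‖) (n : ℕ) (x : ℝ) :
    (1 / (2 * n + 1 : ℂ)) * ∑ j ∈ Finset.range (2 * n + 1),
      (∑' m : ℤ, α m * EE (m * ((j : ℝ) / (2 * (n:ℝ) + 1)))) *
        ∑ l ∈ Finset.Icc (-(n : ℤ)) (n : ℤ), EE (l * (x - (j : ℝ) / (2 * (n:ℝ) + 1)))
    = ∑ l ∈ Finset.Icc (-(n : ℤ)) (n : ℤ),
        (∑' m : ℤ, α m * (if (2 * (n:ℤ) + 1) ∣ (m - l) then 1 else 0)) * EE (l * x) := by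
  have hNR : (2 * (n:ℝ) + 1) ≠ 0 := by positivity
  have hNC : ((2:ℂ) * n + 1) ≠ 0 := by
    intro h
    have : ((2 * (n:ℝ) + 1 : ℝ) : ℂ) = 0 := by push_cast; push_cast at h; exact h
    exact hNR (by exact_mod_cast this)
  have hdft : ∀ k : ℤ, ∑ j ∈ Finset.range (2 * n + 1), EE ((k:ℝ) * (j:ℝ) / (2 * (n:ℝ) + 1))
      = if (2 * (n:ℤ) + 1) ∣ k then ((2:ℂ) * n + 1) else 0 := by
    intro k
    have h := dft_sum (2 * n + 1) (by omega) k
    have h1 : ∀ j : ℕ, ((k:ℝ) * (j:ℝ)) / ((2 * n + 1 : ℕ) : ℝ) = (k:ℝ) * (j:ℝ) / (2 * (n:ℝ) + 1) := by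
      intro j; norm_num
    rw [Finset.sum_congr rfl (fun j _ => by rw [← h1 j])]
    rw [h]
    have h2 : ((2 * n + 1 : ℕ) : ℤ) = 2 * (n:ℤ) + 1 := by push_cast; ring
    rw [h2]
    split <;> [skip; rfl]
    push_cast; ring
  have hsum1 : ∀ (c : ℝ) (d : ℝ), Summable fun m : ℤ => α m * EE (m * c) * EE d := by
    intro c d
    apply Summable.of_norm
    have : (fun m : ℤ => ‖α m * EE (m * c) * EE d‖) = fun m => ‖α m‖ := by
      funext m; rw [norm_mul, norm_mul, EE_norm, EE_norm, mul_one, mul_one]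
    rw [this]; exact hα
  calc (1 / (2 * (n:ℂ) + 1)) * ∑ j ∈ Finset.range (2 * n + 1),
      (∑' m : ℤ, α m * EE (m * ((j : ℝ) / (2 * (n:ℝ) + 1)))) *
        ∑ l ∈ Finset.Icc (-(n : ℤ)) (n : ℤ), EE (l * (x - (j : ℝ) / (2 * (n:ℝ) + 1)))
      = (1 / (2 * (n:ℂ) + 1)) * ∑ j ∈ Finset.range (2 * n + 1), ∑ l ∈ Finset.Icc (-(n : ℤ)) (n : ℤ),
          ∑' m : ℤ, α m * EE (m * ((j : ℝ) / (2 * (n:ℝ) + 1))) * EE (l * (x - (j : ℝ) / (2 * (n:ℝ) + 1))) := by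
        congr 1
        refine Finset.sum_congr rfl fun j _ => ?_
        rw [Finset.mul_sum]
        exact Finset.sum_congr rfl fun l _ => (tsum_mul_right).symm
    _ = (1 / (2 * (n:ℂ) + 1)) * ∑ l ∈ Finset.Icc (-(n : ℤ)) (n : ℤ), ∑ j ∈ Finset.range (2 * n + 1),
          ∑' m : ℤ, α m * EE (m * ((j : ℝ) / (2 * (n:ℝ) + 1))) * EE (l * (x - (j : ℝ) / (2 * (n:ℝ) + 1))) := by
        rw [Finset.sum_comm]
    _ = (1 / (2 * (n:ℂ) + 1)) * ∑ l ∈ Finset.Icc (-(n : ℤ)) (n : ℤ),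
          ∑' m : ℤ, ∑ j ∈ Finset.range (2 * n + 1),
            α m * EE (m * ((j : ℝ) / (2 * (n:ℝ) + 1))) * EE (l * (x - (j : ℝ) / (2 * (n:ℝ) + 1))) := by
        congr 1
        refine Finset.sum_congr rfl fun l _ => ?_
        exact (Summable.tsum_finsetSum fun j _ => hsum1 _ _).symm
    _ = (1 / (2 * (n:ℂ) + 1)) * ∑ l ∈ Finset.Icc (-(n : ℤ)) (n : ℤ),
          ∑' m : ℤ, α m * EE (l * x) * ∑ j ∈ Finset.range (2 * n + 1), EE (((m - l : ℤ):ℝ) * (j:ℝ) / (2 * (n:ℝ) + 1)) := by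
        congr 1
        refine Finset.sum_congr rfl fun l _ => ?_
        refine tsum_congr fun m => ?_
        rw [Finset.mul_sum]
        refine Finset.sum_congr rfl fun j _ => ?_
        rw [mul_assoc, mul_assoc]
        congr 1
        rw [← EE_add, ← EE_add]
        congr 1
        push_cast
        field_simp
        ring
    _ = ∑ l ∈ Finset.Icc (-(n : ℤ)) (n : ℤ),
          (∑' m : ℤ, α m * (if (2 * (n:ℤ) + 1) ∣ (m - l) then 1 else 0)) * EE (l * x) := by
        rw [Finset.mul_sum]
        refine Finset.sum_congr rfl fun l _ => ?_
        rw [← tsum_mul_left, ← tsum_mul_right]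
        refine tsum_congr fun m => ?_
        rw [hdft (m - l)]
        split
        · field_simp
        · simp

lemma alias_eq (α : ℤ → ℂ) (n : ℕ) (l : ℤ) :
    (∑' m : ℤ, α m * (if (2 * (n:ℤ) + 1) ∣ (m - l) then 1 else 0))
      = ∑' θ : ℤ, α (l + θ * (2 * (n:ℤ) + 1)) := by
  set N : ℤ := 2 * (n:ℤ) + 1 with hN
  set g : ℤ → ℂ := fun θ => α (l + θ * N) with hg
  have hNpos : 0 < N := by omega
  refine tsum_eq_tsum_of_ne_zero_bij (i := fun θ : Function.support g => l + θ.1 * N) ?_ ?_ ?_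
  · intro a b h
    have : a.1 * N = b.1 * N := by simpa using h
    exact Subtype.ext (by
      have := mul_right_cancel₀ (by omega : N ≠ 0) this
      exact this)
  · intro m hm
    simp only [Function.mem_support] at hm
    have hdvd : N ∣ (m - l) := by
      by_contra hnd
      apply hm
      simp [hnd]
    obtain ⟨θ, hθ⟩ := hdvd
    have hm2 : m = l + θ * N := by rw [mul_comm θ N]; omega
    refine ⟨⟨θ, ?_⟩, ?_⟩
    · simp only [Function.mem_support, hg]
      rw [← hm2]
      intro h0
      apply hm
      rw [h0]
      simp
    · simp [← hm2]
  · intro θ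
    have : N ∣ (l + θ.1 * N - l) := ⟨θ.1, by ring⟩
    simp [hg, this]

theorem stmt_9 (α : ℤ → ℂ) (hα : Summable fun m => ‖α m‖)
    (f : ℝ → ℂ)
    (hf : ∀ x : ℝ, f x = ∑' m : ℤ, α m * Complex.exp (2 * Real.pi * Complex.I * m * x))
    (n : ℕ) (hn : 1 ≤ n) :
    (∫ x in (0:ℝ)..1,
        ‖f x - (1 / (2 * n + 1 : ℂ)) * ∑ j ∈ Finset.range (2 * n + 1),
            f ((j : ℝ) / (2 * n + 1)) *
              ∑ l ∈ Finset.Icc (-(n : ℤ)) (n : ℤ),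
                Complex.exp (2 * Real.pi * Complex.I * l * (x - (j : ℝ) / (2 * n + 1)))‖ ^ 2)
      = (∑' j : {j : ℤ // (n : ℤ) < |j|}, ‖α j.1‖ ^ 2)
        + ∑ k ∈ Finset.Icc (-(n : ℤ)) (n : ℤ),
            ‖∑' θ : {θ : ℤ // θ ≠ 0}, α (k + θ.1 * (2 * n + 1))‖ ^ 2 := by
  classical
  set B : ℤ → ℂ := fun k => ∑' θ : {θ : ℤ // θ ≠ 0}, α (k + θ.1 * (2 * (n:ℤ) + 1)) with hB
  set γ : ℤ → ℂ := fun m => if m ∈ Finset.Icc (-(n:ℤ)) (n:ℤ) then -(B m) else α m with hγdef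
  have hN0 : (2 * (n:ℤ) + 1) ≠ 0 := by omega
  -- summability of the aliasing series
  have hAsummn : ∀ l : ℤ, Summable fun θ : ℤ => ‖α (l + θ * (2 * (n:ℤ) + 1))‖ := by
    intro l
    apply hα.comp_injective
    intro a b h
    simp only at h
    have h2 : a * (2 * (n:ℤ) + 1) = b * (2 * (n:ℤ) + 1) := by omega
    exact mul_right_cancel₀ hN0 h2
  have hAsumm : ∀ l : ℤ, Summable fun θ : ℤ => α (l + θ * (2 * (n:ℤ) + 1)) :=
    fun l => (hAsummn l).of_norm
  -- splitting off θ = 0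
  have hβα : ∀ l : ℤ, (∑' θ : ℤ, α (l + θ * (2 * (n:ℤ) + 1))) = α l + B l := by
    intro l
    have h := Summable.sum_add_tsum_compl (s := ({0} : Finset ℤ)) (hAsumm l)
    rw [← h]
    congr 1
    · simp
    · rw [← (Equiv.subtypeEquivRight (fun θ : ℤ => by simp : ∀ θ : ℤ, θ ≠ 0 ↔ θ ∈ ((({0} : Finset ℤ) : Set ℤ)ᶜ))).tsum_eq
        (fun θ : ↑((({0} : Finset ℤ) : Set ℤ)ᶜ) => α (l + θ.1 * (2 * (n:ℤ) + 1)))]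
      exact tsum_congr fun a => by rw [Equiv.subtypeEquivRight_apply]
  -- norm summability of γ
  have hBfin : Summable fun m : ℤ => if m ∈ Finset.Icc (-(n:ℤ)) (n:ℤ) then ‖B m‖ + ‖α m‖ else 0 :=
    summable_of_ne_finset_zero (s := Finset.Icc (-(n:ℤ)) (n:ℤ)) (fun b hb => if_neg hb)
  have hγnorm : Summable fun m : ℤ => ‖γ m‖ := by
    refine Summable.of_nonneg_of_le (fun m => norm_nonneg _) ?_ (hα.add hBfin)
    · intro m
      by_cases hm : m ∈ Finset.Icc (-(n:ℤ)) (n:ℤ)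
      · rw [hγdef]; simp only [if_pos hm, norm_neg]
        have := norm_nonneg (α m)
        nlinarith [norm_nonneg (B m), norm_nonneg (α m)]
      · rw [hγdef]; simp only [if_neg hm]
        simp
  have hγsq : Summable fun m : ℤ => ‖γ m‖ ^ 2 := by
    refine Summable.of_nonneg_of_le (fun m => sq_nonneg _) ?_ (hγnorm.mul_left (∑' k : ℤ, ‖γ k‖))
    · intro m
      have h1 : ‖γ m‖ ≤ ∑' k : ℤ, ‖γ k‖ := hγnorm.le_tsum m (fun _ _ => norm_nonneg _)
      have h2 : (0:ℝ) ≤ ‖γ m‖ := norm_nonneg _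
      nlinarith
  -- f in EE form
  have hfE : ∀ y : ℝ, f y = ∑' m : ℤ, α m * EE (m * y) := by
    intro y
    rw [hf y]
    refine tsum_congr fun m => ?_
    rw [EE]
    congr 1
    push_cast
    ring
  -- the pointwise identity
  have hpt : ∀ x : ℝ, f x - (1 / (2 * n + 1 : ℂ)) * ∑ j ∈ Finset.range (2 * n + 1),
            f ((j : ℝ) / (2 * n + 1)) *
              ∑ l ∈ Finset.Icc (-(n : ℤ)) (n : ℤ),
                Complex.exp (2 * Real.pi * Complex.I * l * (x - (j : ℝ) / (2 * n + 1)))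
      = ∑' m : ℤ, γ m * EE (m * x) := by
    intro x
    have hS : (1 / (2 * n + 1 : ℂ)) * ∑ j ∈ Finset.range (2 * n + 1),
            f ((j : ℝ) / (2 * n + 1)) *
              ∑ l ∈ Finset.Icc (-(n : ℤ)) (n : ℤ),
                Complex.exp (2 * Real.pi * Complex.I * l * (x - (j : ℝ) / (2 * n + 1)))
        = ∑ l ∈ Finset.Icc (-(n:ℤ)) (n:ℤ), (α l + B l) * EE (l * x) := by
      calc (1 / (2 * n + 1 : ℂ)) * ∑ j ∈ Finset.range (2 * n + 1),
            f ((j : ℝ) / (2 * n + 1)) *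
              ∑ l ∈ Finset.Icc (-(n : ℤ)) (n : ℤ),
                Complex.exp (2 * Real.pi * Complex.I * l * (x - (j : ℝ) / (2 * n + 1)))
          = (1 / (2 * n + 1 : ℂ)) * ∑ j ∈ Finset.range (2 * n + 1),
              (∑' m : ℤ, α m * EE (m * ((j : ℝ) / (2 * (n:ℝ) + 1)))) *
                ∑ l ∈ Finset.Icc (-(n : ℤ)) (n : ℤ), EE (l * (x - (j : ℝ) / (2 * (n:ℝ) + 1))) := by
            congr 1
            refine Finset.sum_congr rfl fun j _ => ?_
            rw [hfE]
            congr 1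
            refine Finset.sum_congr rfl fun l _ => ?_
            rw [EE]
            congr 1
            push_cast
            ring
        _ = ∑ l ∈ Finset.Icc (-(n : ℤ)) (n : ℤ),
              (∑' m : ℤ, α m * (if (2 * (n:ℤ) + 1) ∣ (m - l) then 1 else 0)) * EE (l * x) :=
            interp_eq α hα n x
        _ = ∑ l ∈ Finset.Icc (-(n:ℤ)) (n:ℤ), (α l + B l) * EE (l * x) := by
            refine Finset.sum_congr rfl fun l _ => ?_
            rw [alias_eq α n l, hβα l]
    rw [hS]
    have hsx : Summable fun m : ℤ => α m * EE (m * x) := by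
      apply Summable.of_norm
      have : (fun m : ℤ => ‖α m * EE (m * x)‖) = fun m => ‖α m‖ := by
        funext m; rw [norm_mul, EE_norm, mul_one]
      rw [this]; exact hα
    have h1 : HasSum (fun m : ℤ => α m * EE (m * x)) (f x) := by
      rw [hfE x]; exact hsx.hasSum
    have h2 : HasSum (fun m : ℤ => if m ∈ Finset.Icc (-(n:ℤ)) (n:ℤ) then (α m + B m) * EE (m * x) else 0)
        (∑ l ∈ Finset.Icc (-(n:ℤ)) (n:ℤ), (α l + B l) * EE (l * x)) := by
      have h := hasSum_sum_of_ne_finset_zero (L := SummationFilter.unconditional ℤ) (s := Finset.Icc (-(n:ℤ)) (n:ℤ))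
        (f := fun m : ℤ => if m ∈ Finset.Icc (-(n:ℤ)) (n:ℤ) then (α m + B m) * EE (m * x) else 0)
        (fun b hb => if_neg hb)
      rwa [Finset.sum_congr rfl (fun m hm => if_pos hm)] at h
    have h3 := h1.sub h2
    have heq : (fun m : ℤ => α m * EE (m * x)
        - (if m ∈ Finset.Icc (-(n:ℤ)) (n:ℤ) then (α m + B m) * EE (m * x) else 0))
        = fun m : ℤ => γ m * EE (m * x) := by
      funext m
      by_cases hm : m ∈ Finset.Icc (-(n:ℤ)) (n:ℤ)
      · rw [hγdef]; simp only [if_pos hm]; ring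
      · rw [hγdef]; simp only [if_neg hm]; ring
    rw [heq] at h3
    exact h3.tsum_eq.symm
  simp only [hpt]
  rw [parseval_hand γ hγnorm]
  rw [← Summable.sum_add_tsum_compl (s := Finset.Icc (-(n:ℤ)) (n:ℤ)) hγsq, add_comm]
  congr 1
  · -- tail sums
    have hiff : ∀ m : ℤ, (n:ℤ) < |m| ↔ m ∈ ((↑(Finset.Icc (-(n:ℤ)) (n:ℤ)) : Set ℤ)ᶜ) := by
      intro m
      simp only [Set.mem_compl_iff, Finset.coe_Icc, Set.mem_Icc, not_and, not_le, lt_abs]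
      constructor
      · intro h h2
        rcases h with h | h <;> omega
      · intro h
        omega
    rw [← (Equiv.subtypeEquivRight hiff).tsum_eq
      (fun m : ↑((↑(Finset.Icc (-(n:ℤ)) (n:ℤ)) : Set ℤ)ᶜ) => ‖γ m.1‖ ^ 2)]
    refine tsum_congr fun a => ?_
    rw [Equiv.subtypeEquivRight_apply]
    have ha : a.1 ∉ Finset.Icc (-(n:ℤ)) (n:ℤ) := by
      have := a.2
      simp only [lt_abs] at this
      simp only [Finset.mem_Icc, not_and, not_le]
      omega
    have hh : γ a.1 = α a.1 := by
      rw [hγdef]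
      simp only [if_neg ha]
    rw [show (‖γ a.1‖ : ℝ) = ‖α a.1‖ from by rw [hh]]
  · -- Icc sums
    refine Finset.sum_congr rfl fun k hk => ?_
    rw [hγdef]
    simp only [if_pos hk, norm_neg]
    rfl
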